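/- Let k ≥ 4 and r ≥ 1 be integers, and let A = {a_1 < a_2 < ⋯ < a_k} be a set of k nonnegative integers with 0 ∈ A. Then the set Σ(𝔸) of nonempty subsequence sums of the sequence 𝔸 = (a_1,…,a_k)_r satisfies |Σ(𝔸)| ≥ 1 + r·k·(k−1)/2. -/

import Mathlib

/-- The set `Σ_α(𝔸)` of sums of subsequences with at least `α` terms of the sequence
in which every element of `A` is repeated exactly `r` times. -/
def SubseqSums (r : ℕ) (A : Finset ℤ) (α : ℕ) : Set ℤ :=
  {x | ∃ lam : ℤ → ℕ, (∀ a, lam a ≤ r) ∧ (∀ a ∉ A, lam a = 0) ∧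
    α ≤ (∑ a ∈ A, lam a) ∧ (∑ a ∈ A, (lam a : ℤ) * a) = x}

/-- Sums of subsequences (possibly empty) of the multiset where each element of `B`
appears `r` times. -/
def IsSum (r : ℕ) (B : Finset ℤ) (x : ℤ) : Prop :=
  ∃ lam : ℤ → ℕ, (∀ a, lam a ≤ r) ∧ (∀ a ∉ B, lam a = 0) ∧
    (∑ a ∈ B, (lam a : ℤ) * a) = x

lemma key (r : ℕ) (hr : 1 ≤ r) :
    ∀ B : Finset ℤ, (∀ x ∈ B, 0 < x) →
    ∃ C : Finset ℤ, C.card = 1 + r * (B.card * (B.card + 1) / 2) ∧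
      (0 : ℤ) ∈ C ∧ (∀ x ∈ C, 0 ≤ x) ∧ (∀ x ∈ C, IsSum r B x) := by
  intro B
  induction B using Finset.induction_on_max with
  | empty =>
    intro _
    refine ⟨{0}, by simp, by simp, by simp, ?_⟩
    intro x hx
    simp only [Finset.mem_singleton] at hx
    subst hx
    exact ⟨fun _ => 0, fun _ => Nat.zero_le _, fun _ _ => rfl, by simp⟩
  | insert a B hmax ih =>
    intro hpos
    have haB : a ∉ B := fun h => lt_irrefl a (hmax a h)
    have ha0 : 0 < a := hpos a (Finset.mem_insert_self a B)
    have hBpos : ∀ x ∈ B, 0 < x := fun x hx => hpos x (Finset.mem_insert_of_mem hx)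
    obtain ⟨C, hcard, h0C, hCnn, hCsum⟩ := ih hBpos
    set m := B.card with hm
    have hmem : ∀ x ∈ insert a B, 0 < x ∧ x ≤ a := by
      intro x hx
      rcases Finset.mem_insert.1 hx with rfl | hx
      · exact ⟨ha0, le_refl x⟩
      · exact ⟨hBpos x hx, (hmax x hx).le⟩
    set L : Finset ℤ :=
      ((Finset.range r) ×ˢ (insert a B)).image (fun q => (q.1 : ℤ) * a + q.2) with hL
    set Sh : Finset ℤ := (C.erase 0).image (fun x => x + r * a) with hSh
    -- bounds on elements of L and Sh
    have hLb : ∀ y ∈ L, 0 < y ∧ y ≤ r * a := by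
      intro y hy
      simp only [hL, Finset.mem_image, Finset.mem_product, Finset.mem_range] at hy
      obtain ⟨⟨t, x⟩, ⟨ht, hx⟩, rfl⟩ := hy
      obtain ⟨hx1, hx2⟩ := hmem x hx
      constructor
      · positivity
      · have h1 : (t : ℤ) ≤ (r : ℤ) - 1 := by
          have : (t : ℤ) < r := by exact_mod_cast ht
          omega
        nlinarith
    have hShb : ∀ y ∈ Sh, r * a < y := by
      intro y hy
      simp only [hSh, Finset.mem_image, Finset.mem_erase] at hy
      obtain ⟨x, ⟨hx0, hxC⟩, rfl⟩ := hy
      have := hCnn x hxC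
      have : 0 < x := lt_of_le_of_ne this (Ne.symm hx0)
      linarith
    have h0L : (0 : ℤ) ∉ L := fun h => lt_irrefl 0 (hLb 0 h).1
    have h0Sh : (0 : ℤ) ∉ Sh := fun h => by
      have hq1 := hShb 0 h
      have hq2 : (0:ℤ) ≤ r * a := by positivity
      omega
    have hdisj : Disjoint L Sh := by
      rw [Finset.disjoint_left]
      intro y hyL hySh
      exact absurd (hShb y hySh) (not_lt.2 (hLb y hyL).2)
    -- cardinality of L
    have hLcard : L.card = r * (m + 1) := by
      rw [hL, Finset.card_image_of_injOn, Finset.card_product, Finset.card_range,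
        Finset.card_insert_of_notMem haB]
      rintro ⟨t, x⟩ h1 ⟨t', x'⟩ h2 heq
      simp only [Finset.mem_coe, Finset.mem_product, Finset.mem_range] at h1 h2
      obtain ⟨hx1, hx2⟩ := hmem x h1.2
      obtain ⟨hx1', hx2'⟩ := hmem x' h2.2
      simp only at heq
      have ht : t = t' := by
        rcases lt_trichotomy t t' with h | h | h
        · exfalso
          have : (t : ℤ) + 1 ≤ t' := by exact_mod_cast h
          nlinarith
        · exact h
        · exfalso
          have : (t' : ℤ) + 1 ≤ t := by exact_mod_cast h
          nlinarith
      subst ht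
      have : x = x' := by linarith
      simp [this]
    -- cardinality of Sh
    have hShcard : Sh.card = r * (m * (m + 1) / 2) := by
      rw [hSh, Finset.card_image_of_injective _ (add_left_injective _),
        Finset.card_erase_of_mem h0C, hcard]
      omega
    refine ⟨insert 0 (L ∪ Sh), ?_, Finset.mem_insert_self _ _, ?_, ?_⟩
    · -- cardinality
      rw [Finset.card_insert_of_notMem (by simp [h0L, h0Sh]),
        Finset.card_union_of_disjoint hdisj, hLcard, hShcard,
        Finset.card_insert_of_notMem haB]
      obtain ⟨c, hc⟩ := Nat.even_mul_succ_self m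
      have h2 : m * (m + 1) / 2 = c := by omega
      have h3 : (m + 1) * (m + 1 + 1) = 2 * (c + (m + 1)) := by
        calc (m + 1) * (m + 1 + 1) = m * (m + 1) + 2 * (m + 1) := by ring
          _ = 2 * (c + (m + 1)) := by omega
      have h4 : (m + 1) * (m + 1 + 1) / 2 = c + (m + 1) := by omega
      rw [h2, h4]
      ring
    · -- nonnegativity
      intro x hx
      rcases Finset.mem_insert.1 hx with rfl | hx
      · exact le_refl 0
      · rcases Finset.mem_union.1 hx with h | h
        · exact (hLb x h).1.le
        · have hq1 := hShb x h
          have hq2 : (0:ℤ) ≤ r * a := by positivity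
          omega
    · -- all are sums
      intro y hy
      rcases Finset.mem_insert.1 hy with rfl | hy
      · exact ⟨fun _ => 0, fun _ => Nat.zero_le _, fun _ _ => rfl, by simp⟩
      rcases Finset.mem_union.1 hy with h | h
      · -- level element
        simp only [hL, Finset.mem_image, Finset.mem_product, Finset.mem_range] at h
        obtain ⟨⟨t, x⟩, ⟨ht, hx⟩, rfl⟩ := h
        refine ⟨fun y => (if y = a then t else 0) + (if y = x then 1 else 0), ?_, ?_, ?_⟩
        · intro y
          simp only []
          split_ifs <;> omega
        · intro y hy'
          have h1 : y ≠ a := fun h => hy' (h ▸ Finset.mem_insert_self a B)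
          have h2 : y ≠ x := fun h => hy' (h ▸ hx)
          simp [h1, h2]
        · have hsum : ∀ y : ℤ, ((((if y = a then t else 0) + (if y = x then 1 else 0)) : ℕ) : ℤ) * y
              = (if y = a then (t:ℤ) * y else 0) + (if y = x then (1:ℤ) * y else 0) := by
            intro y
            split_ifs <;> push_cast <;> ring
          rw [Finset.sum_congr rfl fun y _ => hsum y, Finset.sum_add_distrib,
            Finset.sum_ite_eq' (insert a B) a (fun y => (t:ℤ) * y),
            Finset.sum_ite_eq' (insert a B) x (fun y => (1:ℤ) * y)]
          simp [hx]
      · -- shifted element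
        simp only [hSh, Finset.mem_image, Finset.mem_erase] at h
        obtain ⟨x, ⟨hx0, hxC⟩, rfl⟩ := h
        obtain ⟨lam, hb, hs, hv⟩ := hCsum x hxC
        refine ⟨fun y => if y = a then r else lam y, ?_, ?_, ?_⟩
        · intro y
          by_cases h1 : y = a <;> simp [h1, hb y]
        · intro y hy'
          have h1 : y ≠ a := fun h => hy' (h ▸ Finset.mem_insert_self a B)
          have h2 : y ∉ B := fun h => hy' (Finset.mem_insert_of_mem h)
          simp [h1, hs y h2]
        · have hcong : ∀ y ∈ B, ((if y = a then r else lam y : ℕ) : ℤ) * y = (lam y : ℤ) * y := by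
            intro y hy'
            rw [if_neg (fun h : y = a => haB (h ▸ hy'))]
          rw [Finset.sum_insert haB, Finset.sum_congr rfl hcong, hv]
          simp [add_comm]

theorem stmt_14 (k r : ℕ) (A : Finset ℤ)
    (hk : 4 ≤ k) (hr : 1 ≤ r) (hAcard : A.card = k)
    (hAnonneg : ∀ a ∈ A, 0 ≤ a) (h0A : (0 : ℤ) ∈ A) :
    1 + r * k * (k - 1) / 2 ≤ (SubseqSums r A 1).ncard := by
  set B := A.erase 0 with hBdef
  have hBcard : B.card = k - 1 := by rw [hBdef, Finset.card_erase_of_mem h0A, hAcard]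
  have hBpos : ∀ x ∈ B, 0 < x := by
    intro x hx
    have h1 := hAnonneg x (Finset.mem_of_mem_erase hx)
    have h2 := Finset.ne_of_mem_erase hx
    exact lt_of_le_of_ne h1 (Ne.symm h2)
  obtain ⟨C, hCcard, h0C, hCnn, hCsum⟩ := key r hr B hBpos
  have hA : A = insert 0 B := by rw [hBdef, Finset.insert_erase h0A]
  have hsub : ↑C ⊆ SubseqSums r A 1 := by
    intro x hx
    simp only [Finset.mem_coe] at hx
    obtain ⟨lam, hb, hs, hv⟩ := hCsum x hx
    refine ⟨fun y => if y = 0 then 1 else lam y, ?_, ?_, ?_, ?_⟩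
    · intro y
      by_cases h1 : y = 0 <;> simp [h1, hr, hb y]
    · intro y hy
      have h1 : y ≠ 0 := fun h => hy (h ▸ h0A)
      have h2 : y ∉ B := fun h => hy (Finset.mem_of_mem_erase h)
      simp [h1, hs y h2]
    · calc 1 = (if (0:ℤ) = 0 then 1 else lam 0) := by simp
        _ ≤ ∑ y ∈ A, (if y = 0 then 1 else lam y) :=
          Finset.single_le_sum (f := fun y : ℤ => if y = 0 then 1 else lam y)
            (fun i _ => Nat.zero_le _) h0A
    · have hcong : ∀ y ∈ B, ((if y = 0 then 1 else lam y : ℕ) : ℤ) * y = (lam y : ℤ) * y := by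
        intro y hy
        rw [if_neg (Finset.ne_of_mem_erase hy)]
      rw [hA, Finset.sum_insert (Finset.notMem_erase 0 A), Finset.sum_congr rfl hcong, hv]
      simp
  have hfin : (SubseqSums r A 1).Finite := by
    apply Set.Finite.subset (Set.finite_Icc (0:ℤ) (r * ∑ a ∈ A, a))
    rintro x ⟨lam, hb, hs, hcnt, rfl⟩
    constructor
    · apply Finset.sum_nonneg
      intro a ha
      have := hAnonneg a ha
      positivity
    · rw [Finset.mul_sum]
      apply Finset.sum_le_sum
      intro a ha
      have h1 : (lam a : ℤ) ≤ r := by exact_mod_cast hb a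
      exact mul_le_mul_of_nonneg_right h1 (hAnonneg a ha)
  have hle := Set.ncard_le_ncard hsub hfin
  rw [Set.ncard_coe_finset] at hle
  rw [hBcard] at hCcard
  have hk1 : k - 1 + 1 = k := by omega
  obtain ⟨c, hc⟩ := Nat.even_mul_succ_self (k - 1)
  have h2 : (k - 1) * (k - 1 + 1) / 2 = c := by omega
  have h6 : (k - 1) * k = c + c := by rwa [hk1] at hc
  have h5 : r * k * (k - 1) = 2 * (r * c) := by
    rw [show r * k * (k - 1) = r * ((k - 1) * k) from by ring, h6]
    ring
  rw [h2] at hCcard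
  omega
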